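/- Let a, b ∈ ℝ² and δ > 0. Then the Lebesgue measure of the closed δ-thickening of the segment [a, b] is at most 2δ‖a − b‖ + πδ². -/

import Mathlib

open MeasureTheory

namespace Stmt11Aux

noncomputable section

local notation "E" => EuclideanSpace ℝ (Fin 2)

lemma meas_coord (i : Fin 2) : Measurable fun x : E => x i :=
  (EuclideanSpace.proj (𝕜 := ℝ) i).continuous.measurable

lemma cont_coord (i : Fin 2) : Continuous fun x : E => x i :=
  (EuclideanSpace.proj (𝕜 := ℝ) i).continuous

lemma ball_vol (x : E) {δ : ℝ} (hδ : 0 ≤ δ) :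
    volume (Metric.closedBall x δ) = ENNReal.ofReal (Real.pi * δ ^ 2) := by
  rw [EuclideanSpace.volume_closedBall, Fintype.card_fin]
  have h2 : Real.sqrt Real.pi ^ 2 = Real.pi := Real.sq_sqrt Real.pi_nonneg
  have h3 : ((2 : ℕ) : ℝ) / 2 + 1 = 2 := by norm_num
  rw [h3, h2, Real.Gamma_two, div_one, ← ENNReal.ofReal_pow hδ, ← ENNReal.ofReal_mul (by positivity)]
  ring_nf

lemma plane_vol : volume {x : E | x 0 = 0} = 0 := by
  have : {x : E | x 0 = 0} = (LinearMap.ker ((EuclideanSpace.proj (𝕜 := ℝ) 0 :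
      E →L[ℝ] ℝ) : E →ₗ[ℝ] ℝ) : Set E) := by
    ext x; simp [LinearMap.mem_ker]
  rw [this]
  apply Measure.addHaar_submodule
  intro h
  have := h ▸ Submodule.mem_top (x := (EuclideanSpace.single 0 (1:ℝ) : E)) (R := ℝ)
  simp [LinearMap.mem_ker] at this

lemma rect_vol {L δ : ℝ} (hL : 0 ≤ L) (hδ : 0 ≤ δ) :
    volume {x : E | x 0 ∈ Set.Icc 0 L ∧ x 1 ∈ Set.Icc (-δ) δ} = ENNReal.ofReal (2 * δ * L) := by
  have hpre : (MeasurableEquiv.toLp 2 (Fin 2 → ℝ)).symm ⁻¹'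
      (Set.univ.pi ![Set.Icc 0 L, Set.Icc (-δ) δ])
      = {x : E | x 0 ∈ Set.Icc 0 L ∧ x 1 ∈ Set.Icc (-δ) δ} := by
    ext x
    simp only [Set.mem_preimage, Set.mem_univ_pi, Fin.forall_fin_two, Set.mem_setOf_eq]
    rfl
  rw [← hpre, (EuclideanSpace.volume_preserving_symm_measurableEquiv_toLp (Fin 2)).measure_preimage
      ((MeasurableSet.univ_pi fun i => by
        fin_cases i <;> exact measurableSet_Icc).nullMeasurableSet)]
  rw [volume_pi_pi, Fin.prod_univ_two]
  simp only [Matrix.cons_val_zero, Matrix.cons_val_one, Matrix.head_cons, Real.volume_Icc]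
  rw [← ENNReal.ofReal_mul (by linarith)]
  congr 1
  ring

lemma half_balls {L δ : ℝ} (hL : 0 ≤ L) (hδ : 0 ≤ δ) :
    volume (Metric.closedBall (0 : E) δ ∩ {x : E | x 0 ≤ 0}) +
      volume (Metric.closedBall ((L • EuclideanSpace.single 0 (1:ℝ)) : E) δ ∩ {x : E | L ≤ x 0})
      ≤ ENNReal.ofReal (Real.pi * δ ^ 2) := by
  set w : E := L • EuclideanSpace.single 0 (1:ℝ) with hw
  have hw0 : w 0 = L := by simp [hw, EuclideanSpace.single_apply]
  set B0 : Set E := Metric.closedBall 0 δ ∩ {x : E | x 0 ≤ 0} with hB0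
  set B0' : Set E := Metric.closedBall 0 δ ∩ {x : E | 0 ≤ x 0} with hB0'
  set B1 : Set E := Metric.closedBall w δ ∩ {x : E | L ≤ x 0} with hB1
  have hB1meas : MeasurableSet B1 :=
    Metric.isClosed_closedBall.measurableSet.inter ((isClosed_le continuous_const (cont_coord 0)).measurableSet)
  have hB0'meas : MeasurableSet B0' :=
    Metric.isClosed_closedBall.measurableSet.inter ((isClosed_le continuous_const (cont_coord 0)).measurableSet)
  have htrans : volume B1 = volume B0' := by
    have hmp : MeasurePreserving (fun x : E => x + w) volume volume :=
      measurePreserving_add_right volume w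
    have hpre : (fun x : E => x + w) ⁻¹' B1 = B0' := by
      ext x
      simp only [hB1, hB0', Set.mem_preimage, Set.mem_inter_iff, Metric.mem_closedBall,
        Set.mem_setOf_eq]
      constructor
      · rintro ⟨h1, h2⟩
        refine ⟨?_, ?_⟩
        · have : dist (x + w) w = dist x 0 := by
            rw [dist_eq_norm, dist_eq_norm]; simp
          linarith [this ▸ h1]
        · have : (x + w) 0 = x 0 + L := by
            simp [PiLp.add_apply, hw0]
          linarith [this ▸ h2]
      · rintro ⟨h1, h2⟩
        refine ⟨?_, ?_⟩
        · have : dist (x + w) w = dist x 0 := by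
            rw [dist_eq_norm, dist_eq_norm]; simp
          linarith [this]
        · have : (x + w) 0 = x 0 + L := by simp [PiLp.add_apply, hw0]
          rw [this]; linarith
    have h := hmp.measure_preimage hB1meas.nullMeasurableSet
    rw [hpre] at h
    exact h.symm
  rw [htrans]
  have hsum : volume B0 + volume B0' = volume (B0 ∪ B0') + volume (B0 ∩ B0') :=
    (measure_union_add_inter B0 hB0'meas).symm
  have hunion : B0 ∪ B0' = Metric.closedBall (0 : E) δ := by
    ext x
    simp only [hB0, hB0', Set.mem_union, Set.mem_inter_iff, Set.mem_setOf_eq]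
    constructor
    · rintro (⟨h, _⟩ | ⟨h, _⟩) <;> exact h
    · intro h; rcases le_total (x 0) 0 with h' | h'
      · exact Or.inl ⟨h, h'⟩
      · exact Or.inr ⟨h, h'⟩
  have hinter : volume (B0 ∩ B0') = 0 := by
    refine measure_mono_null ?_ plane_vol
    rintro x ⟨⟨_, h1⟩, ⟨_, h2⟩⟩
    exact le_antisymm h1 h2
  rw [hsum, hunion, hinter, add_zero, ball_vol _ hδ]

lemma key (L δ : ℝ) (hL : 0 ≤ L) (hδ : 0 < δ) :
    volume (Metric.cthickening δ
        (segment ℝ (0 : E) ((L • EuclideanSpace.single 0 (1:ℝ)) : E)))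
      ≤ ENNReal.ofReal (2 * δ * L + Real.pi * δ ^ 2) := by
  set w : E := L • EuclideanSpace.single 0 (1:ℝ) with hw
  have hw0 : w 0 = L := by simp [hw, EuclideanSpace.single_apply]
  have hw1 : w 1 = 0 := by simp [hw, EuclideanSpace.single_apply]
  set R : Set E := {x : E | x 0 ∈ Set.Icc 0 L ∧ x 1 ∈ Set.Icc (-δ) δ} with hR
  set B0 : Set E := Metric.closedBall 0 δ ∩ {x : E | x 0 ≤ 0} with hB0
  set B1 : Set E := Metric.closedBall w δ ∩ {x : E | L ≤ x 0} with hB1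
  have hScompact : IsCompact (segment ℝ (0 : E) w) := by
    rw [segment_eq_image]
    exact (isCompact_Icc).image (by fun_prop)
  have hsub : Metric.cthickening δ (segment ℝ (0 : E) w) ⊆ R ∪ (B0 ∪ B1) := by
    rw [hScompact.cthickening_eq_biUnion_closedBall hδ.le]
    rintro x hx
    simp only [Set.mem_iUnion] at hx
    obtain ⟨p, hpS, hxp⟩ := hx
    rw [segment_eq_image] at hpS
    obtain ⟨t, ⟨ht0, ht1⟩, rfl⟩ := hpS
    have hxp' : x ∈ Metric.closedBall (t • w) δ := by simpa using hxp
    clear hxp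
    rename' hxp' => hxp
    have hp0 : (t • w) 0 = t * L := by simp [PiLp.smul_apply, hw0, smul_eq_mul]
    have hp1 : (t • w) 1 = 0 := by simp [PiLp.smul_apply, hw1]
    have hdist : dist x (t • w) ≤ δ := Metric.mem_closedBall.mp hxp
    have hsq : (x 0 - t * L) ^ 2 + (x 1) ^ 2 ≤ δ ^ 2 := by
      rw [EuclideanSpace.dist_eq, Fin.sum_univ_two, Real.dist_eq, Real.dist_eq, sq_abs, sq_abs,
        hp0, hp1, sub_zero] at hdist
      have hA : (0:ℝ) ≤ (x 0 - t * L) ^ 2 + (x 1) ^ 2 := by positivity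
      nlinarith [Real.sq_sqrt hA, Real.sqrt_nonneg ((x 0 - t * L) ^ 2 + (x 1) ^ 2)]
    have htL : 0 ≤ t * L := mul_nonneg ht0 hL
    have htL' : t * L ≤ L := by nlinarith
    have hx1 : x 1 ∈ Set.Icc (-δ) δ := by
      constructor <;> nlinarith
    rcases le_or_gt (x 0) 0 with h0 | h0
    · refine Or.inr (Or.inl ⟨?_, h0⟩)
      rw [Metric.mem_closedBall, EuclideanSpace.dist_eq, Fin.sum_univ_two]
      have : dist (x 0) ((0:E) 0) ^ 2 + dist (x 1) ((0:E) 1) ^ 2 ≤ δ ^ 2 := by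
        have hz : ((0:E) 0) = 0 ∧ ((0:E) 1) = 0 := ⟨rfl, rfl⟩
        rw [hz.1, hz.2, Real.dist_eq, Real.dist_eq, sub_zero, sub_zero, sq_abs, sq_abs]
        nlinarith
      calc Real.sqrt (dist (x 0) ((0:E) 0) ^ 2 + dist (x 1) ((0:E) 1) ^ 2)
          ≤ Real.sqrt (δ ^ 2) := Real.sqrt_le_sqrt this
        _ = δ := Real.sqrt_sq hδ.le
    rcases le_or_gt (x 0) L with h1 | h1
    · exact Or.inl ⟨⟨h0.le, h1⟩, hx1⟩
    · refine Or.inr (Or.inr ⟨?_, h1.le⟩)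
      rw [Metric.mem_closedBall, EuclideanSpace.dist_eq, Fin.sum_univ_two]
      have : dist (x 0) (w 0) ^ 2 + dist (x 1) (w 1) ^ 2 ≤ δ ^ 2 := by
        rw [hw0, hw1, Real.dist_eq, Real.dist_eq, sub_zero, sq_abs, sq_abs]
        nlinarith
      calc Real.sqrt (dist (x 0) (w 0) ^ 2 + dist (x 1) (w 1) ^ 2)
          ≤ Real.sqrt (δ ^ 2) := Real.sqrt_le_sqrt this
        _ = δ := Real.sqrt_sq hδ.le
  calc volume (Metric.cthickening δ (segment ℝ (0 : E) w))
      ≤ volume (R ∪ (B0 ∪ B1)) := measure_mono hsub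
    _ ≤ volume R + volume (B0 ∪ B1) := measure_union_le _ _
    _ ≤ volume R + (volume B0 + volume B1) := by
        gcongr
        exact measure_union_le _ _
    _ ≤ ENNReal.ofReal (2 * δ * L) + ENNReal.ofReal (Real.pi * δ ^ 2) := by
        gcongr
        · exact (rect_vol hL hδ.le).le
        · exact half_balls hL hδ.le
    _ = ENNReal.ofReal (2 * δ * L + Real.pi * δ ^ 2) := by
        rw [← ENNReal.ofReal_add (by positivity) (by positivity)]

end

end Stmt11Aux

open Stmt11Aux in
/-- The Lebesgue measure of the closed `δ`-thickening of a segment `[a, b]` in the plane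
is at most `2δ‖a − b‖ + πδ²` (rectangle plus two half-disks). -/
theorem stmt11 (a b : EuclideanSpace ℝ (Fin 2)) (δ : ℝ) (hδ : 0 < δ) :
    volume (Metric.cthickening δ (segment ℝ a b)) ≤
      ENNReal.ofReal (2 * δ * ‖a - b‖ + Real.pi * δ ^ 2) := by
  rcases eq_or_ne a b with rfl | hab
  · rw [segment_same, Metric.cthickening_singleton _ hδ.le, ball_vol _ hδ.le]
    simp
  · set L : ℝ := ‖a - b‖ with hLdef
    have hL : 0 ≤ L := norm_nonneg _
    set v : EuclideanSpace ℝ (Fin 2) := b - a with hv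
    set w : EuclideanSpace ℝ (Fin 2) := L • EuclideanSpace.single 0 (1:ℝ) with hw
    have hvw : ‖v‖ = ‖w‖ := by
      rw [hv, hw, norm_smul, EuclideanSpace.norm_single, norm_one, mul_one, norm_sub_rev,
        Real.norm_eq_abs, abs_of_nonneg hL]
    set f := Submodule.reflection (ℝ ∙ (v - w))ᗮ with hf
    have hfv : f v = w := Submodule.reflection_sub hvw
    set G : EuclideanSpace ℝ (Fin 2) → EuclideanSpace ℝ (Fin 2) := fun x => f (x - a) with hG
    have hGiso : Isometry G := by
      intro x y
      rw [hG]
      simp only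
      rw [f.isometry.edist_eq, edist_sub_right]
    have hGmp : MeasurePreserving G volume volume :=
      f.measurePreserving.comp (measurePreserving_sub_right volume a)
    have himg : G '' segment ℝ a b ⊆ segment ℝ (0 : EuclideanSpace ℝ (Fin 2)) w := by
      rintro y ⟨p, hp, rfl⟩
      rw [segment_eq_image] at hp ⊢
      obtain ⟨t, ht, rfl⟩ := hp
      refine ⟨t, ht, ?_⟩
      have h1 : ((1 - t) • a + t • b) - a = t • v := by
        rw [hv]; module
      rw [hG]
      simp only
      rw [h1, f.map_smul, hfv]
      simp
    have hsub : Metric.cthickening δ (segment ℝ a b) ⊆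
        G ⁻¹' (Metric.cthickening δ (segment ℝ (0 : EuclideanSpace ℝ (Fin 2)) w)) := by
      intro x hx
      simp only [Set.mem_preimage, Metric.mem_cthickening_iff] at hx ⊢
      calc EMetric.infEdist (G x) (segment ℝ 0 w)
          ≤ EMetric.infEdist (G x) (G '' segment ℝ a b) := EMetric.infEdist_anti himg
        _ = EMetric.infEdist x (segment ℝ a b) := EMetric.infEdist_image hGiso
        _ ≤ ENNReal.ofReal δ := hx
    calc volume (Metric.cthickening δ (segment ℝ a b))
        ≤ volume (G ⁻¹' (Metric.cthickening δ (segment ℝ (0 : EuclideanSpace ℝ (Fin 2)) w))) :=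
          measure_mono hsub
      _ = volume (Metric.cthickening δ (segment ℝ (0 : EuclideanSpace ℝ (Fin 2)) w)) :=
          hGmp.measure_preimage (Metric.isClosed_cthickening.measurableSet.nullMeasurableSet)
      _ ≤ ENNReal.ofReal (2 * δ * L + Real.pi * δ ^ 2) := key L δ hL hδ
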